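/- For every integer d ≥ 3 and every δ ∈ (0, d−2), there exists c = c(d, δ) > 0 such that for all ε ∈ (0, c), (d−2)·h(ε) > d·ε + d·h( (d−2−δ)·ε / (d·(1−ε)) ). (This is the analytic core of the paper's theorem that trees satisfy 'Sparse implies Thin': the final entropy inequality chain from the star–vertex entropy inequality, rearranged to δ·ε·log(1/ε) ≤ O_d(ε), cannot hold for arbitrarily small ε.) -/
import Mathlib

lemma binEntropy_ge_aux {x : ℝ} (hx0 : 0 < x) (hx1 : x < 1) :
    x * Real.log x⁻¹ ≤ Real.binEntropy x := by
  rw [Real.binEntropy]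
  have h1 : (0:ℝ) ≤ (1 - x) * Real.log (1 - x)⁻¹ := by
    apply mul_nonneg (by linarith)
    exact Real.log_nonneg (one_le_inv₀ (by linarith) |>.2 (by linarith))
  linarith

lemma binEntropy_le_aux {x : ℝ} (hx0 : 0 < x) (hx1 : x < 1) :
    Real.binEntropy x ≤ x * Real.log x⁻¹ + x := by
  rw [Real.binEntropy]
  have h1 : Real.log (1 - x)⁻¹ ≤ (1 - x)⁻¹ - 1 :=
    Real.log_le_sub_one_of_pos (inv_pos.2 (by linarith))
  have h2 : (1 - x) * Real.log (1 - x)⁻¹ ≤ x := by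
    have h4 := mul_le_mul_of_nonneg_left h1 (by linarith : (0:ℝ) ≤ 1 - x)
    have h3 : (1 - x) * ((1 - x)⁻¹ - 1) = x := by
      rw [mul_sub, mul_inv_cancel₀ (by linarith : (1:ℝ) - x ≠ 0)]; ring
    linarith [h3 ▸ h4]
  linarith

set_option maxHeartbeats 1000000 in
/-- Analytic core of 'Trees satisfy Sparse implies Thin': for every integer
`d ≥ 3` and `δ ∈ (0, d−2)`, there is `c > 0` such that for all `ε ∈ (0, c)`,
`(d−2)·h(ε) > d·ε + d·h((d−2−δ)·ε / (d·(1−ε)))`, with `h` binary entropy. -/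
theorem stmt_7 (d : ℕ) (hd : 3 ≤ d) (δ : ℝ) (hδ : δ ∈ Set.Ioo 0 ((d : ℝ) - 2)) :
    ∃ c > (0 : ℝ), ∀ ε ∈ Set.Ioo (0 : ℝ) c,
      ((d : ℝ) - 2) * Real.binEntropy ε >
        d * ε + d * Real.binEntropy (((d : ℝ) - 2 - δ) * ε / (d * (1 - ε))) := by
  obtain ⟨hδ0, hδd⟩ := hδ
  have hD : (3:ℝ) ≤ (d:ℝ) := by exact_mod_cast hd
  set D : ℝ := (d:ℝ) with hDdef
  set A : ℝ := D - 2 - δ with hAdef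
  have hA0 : 0 < A := by simp only [hAdef]; linarith
  have hAD : A < D := by simp only [hAdef]; linarith
  set α : ℝ := A / D with hαdef
  have hD0 : (0:ℝ) < D := by linarith
  have hα0 : 0 < α := div_pos hA0 hD0
  have hα1 : α < 1 := (div_lt_one hD0).2 hAD
  have hlogα : 0 ≤ Real.log α⁻¹ :=
    Real.log_nonneg ((one_le_inv₀ hα0).2 hα1.le)
  set K : ℝ := D + 2*A + 2*A*Real.log α⁻¹ with hKdef
  have hK0 : 0 < K := by positivity
  refine ⟨min (min (1/2) (δ/(4*A))) (Real.exp (-(2*K/δ))), ?_, ?_⟩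
  · apply lt_min (lt_min (by norm_num) (by positivity)) (Real.exp_pos _)
  intro ε ⟨hε0, hεc⟩
  have hε2 : ε < 1/2 := lt_of_lt_of_le hεc ((min_le_left _ _).trans (min_le_left _ _))
  have hεA : ε < δ/(4*A) := lt_of_lt_of_le hεc ((min_le_left _ _).trans (min_le_right _ _))
  have hεK : ε < Real.exp (-(2*K/δ)) := lt_of_lt_of_le hεc (min_le_right _ _)
  have hε1 : ε < 1 := by linarith
  have h1ε : 0 < 1 - ε := by linarith
  set L : ℝ := Real.log ε⁻¹ with hLdef
  have hL0 : 0 < L := Real.log_pos ((one_lt_inv₀ hε0).2 hε1)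
  -- the argument of the second entropy
  have harg : (D - 2 - δ) * ε / (D * (1 - ε)) = α * ε / (1 - ε) := by
    rw [hαdef]; field_simp; try ring
  set t : ℝ := α * ε / (1 - ε) with htdef
  have ht0 : 0 < t := by positivity
  have ht_le : t ≤ α * ε * (1 + 2*ε) := by
    rw [htdef, div_le_iff₀ h1ε]
    nlinarith [mul_nonneg (mul_nonneg hα0.le hε0.le)
      (mul_nonneg hε0.le (by linarith : (0:ℝ) ≤ 1 - 2*ε))]
  have ht1 : t < 1 := by
    have h5 : ε * (1 + 2*ε) < 1 := by nlinarith
    have h6 := mul_lt_mul'' hα1 h5 hα0.le (by positivity)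
    calc t ≤ α * ε * (1 + 2*ε) := ht_le
      _ = α * (ε * (1 + 2*ε)) := by ring
      _ < 1 * 1 := h6
      _ = 1 := by norm_num
  -- bound log t⁻¹
  have hlogt : Real.log t⁻¹ ≤ Real.log α⁻¹ + L := by
    have h1 : t⁻¹ ≤ α⁻¹ * ε⁻¹ := by
      rw [htdef, inv_div, div_le_iff₀ (by positivity)]
      have h9 : α⁻¹ * ε⁻¹ * (α * ε) = 1 := by field_simp
      rw [h9]; linarith
    calc Real.log t⁻¹ ≤ Real.log (α⁻¹ * ε⁻¹) := Real.log_le_log (by positivity) h1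
      _ = Real.log α⁻¹ + L := by rw [Real.log_mul (by positivity) (by positivity)]
  -- upper bound on binEntropy t
  have hub : Real.binEntropy t ≤ t * (Real.log α⁻¹ + L) + t := by
    have h10 := binEntropy_le_aux ht0 ht1
    have h2 : t * Real.log t⁻¹ ≤ t * (Real.log α⁻¹ + L) :=
      mul_le_mul_of_nonneg_left hlogt (le_of_lt ht0)
    linarith
  have hlb : ε * L ≤ Real.binEntropy ε := binEntropy_ge_aux hε0 hε1
  have hDt_le : D * t ≤ A * ε * (1 + 2*ε) := by
    have h11 := mul_le_mul_of_nonneg_left ht_le (le_of_lt hD0)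
    have h12 : D * (α * ε * (1 + 2*ε)) = A * ε * (1 + 2*ε) := by
      rw [hαdef]; field_simp; try ring
    linarith [h12 ▸ h11]
  have hX0 : (0:ℝ) ≤ Real.log α⁻¹ + L + 1 := by linarith
  have hmain : D * Real.binEntropy t ≤ A * ε * (1 + 2*ε) * (Real.log α⁻¹ + L + 1) := by
    calc D * Real.binEntropy t ≤ D * (t * (Real.log α⁻¹ + L) + t) :=
          mul_le_mul_of_nonneg_left hub (le_of_lt hD0)
      _ = (D * t) * (Real.log α⁻¹ + L + 1) := by ring
      _ ≤ A * ε * (1 + 2*ε) * (Real.log α⁻¹ + L + 1) :=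
          mul_le_mul_of_nonneg_right hDt_le hX0
  -- ε < exp(-(2K/δ)) gives δ * L > 2K
  have hLK : 2*K < δ * L := by
    have hlog : Real.log ε < -(2*K/δ) := by
      have := Real.log_lt_log hε0 hεK
      rwa [Real.log_exp] at this
    have hLeq : L = -Real.log ε := by rw [hLdef, Real.log_inv]
    rw [hLeq]
    have h3 : 2*K/δ < -Real.log ε := by linarith
    calc 2*K = δ * (2*K/δ) := by field_simp
      _ < δ * (-Real.log ε) := mul_lt_mul_of_pos_left h3 hδ0
  -- 2*A*ε < δ/2
  have hAε : 2*A*ε < δ/2 := by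
    have h13 : ε * (4*A) < δ := (lt_div_iff₀ (by positivity)).1 hεA
    nlinarith
  -- finish
  rw [harg]
  clear_value D A α K L t
  have hεL : 0 < ε * L := by positivity
  have expand : A * ε * (1 + 2*ε) * (Real.log α⁻¹ + L + 1)
      = A * (ε * L) + (2*A*ε) * (ε*L) + A*ε*(1+2*ε)*(Real.log α⁻¹ + 1) := by ring
  have hterm2 : (2*A*ε) * (ε*L) ≤ (δ/2) * (ε*L) :=
    mul_le_mul_of_nonneg_right (le_of_lt hAε) (le_of_lt hεL)
  have hterm3 : A*ε*(1+2*ε)*(Real.log α⁻¹ + 1) ≤ 2*A*(Real.log α⁻¹ + 1)*ε := by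
    nlinarith [mul_nonneg (mul_nonneg (mul_nonneg hA0.le hε0.le)
      (by linarith : (0:ℝ) ≤ Real.log α⁻¹ + 1)) (by linarith : (0:ℝ) ≤ 1 - 2*ε)]
  have hK_bound : D*ε + 2*A*(Real.log α⁻¹ + 1)*ε = K * ε := by rw [hKdef]; ring
  have hKε : K * ε < (δ/2) * (ε * L) := by
    have h4 : 2*K*ε < δ*L*ε := mul_lt_mul_of_pos_right hLK hε0
    nlinarith
  have hlhs : (A + δ) * (ε * L) ≤ (D - 2) * Real.binEntropy ε := by
    have hD2 : D - 2 = A + δ := by rw [hAdef]; ring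
    rw [hD2]
    exact mul_le_mul_of_nonneg_left hlb (by linarith)
  -- assemble
  have hrhs : D * ε + D * Real.binEntropy t ≤ A * (ε*L) + (δ/2)*(ε*L) + K * ε := by
    have h14 := hmain
    rw [expand] at h14
    linarith
  have hgap : A * (ε*L) + (δ/2)*(ε*L) + K * ε < (A + δ) * (ε * L) := by
    nlinarith
  linarith
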